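/- For a tree-shift X the following are equivalent: (i) X is irreducible; (ii) for every pair of blocks u ∈ B_n(X) and v ∈ B_m(X) (with n, m ∈ ℕ possibly different) there exist a family {P_w}_{w ∈ Σ^{n−1}} of complete prefix sets and a tree t ∈ X such that the n-block of t rooted at ε equals u and the m-block of t rooted at wx equals v for every w ∈ Σ^{n−1} and every x ∈ P_w; (iii) for every pair of blocks u ∈ B_n(X) and v ∈ B_m(X) there exist finitely many complete prefix sets P_1,…,P_l and a tree t ∈ X such that the n-block of t rooted at ε equals u and, for each w ∈ Σ^{n−1}, there is some k ∈ {1,…,l} with the m-block of t rooted at wx equal to v for all x ∈ P_k. -/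
import Mathlib


/-!  Tree-shifts on the binary tree: basic definitions. -/

/-- An infinite tree over alphabet `A`: a labeling of all finite words over
`Σ = {0,1}` (encoded as `List Bool`). -/
abbrev InfTree (A : Type*) : Type _ := List Bool → A

/-- The shift map `σ_w`: `(σ_w t)_x = t_{wx}`. -/
def treeShift {A : Type*} (w : List Bool) (t : InfTree A) : InfTree A :=
  fun x => t (w ++ x)

/-- A pattern: a labeling of a finite prefix-closed set of words. -/
structure TreePattern (A : Type*) where
  supp : Finset (List Bool)
  prefixClosed : ∀ x ∈ supp, ∀ y : List Bool, y <+: x → y ∈ supp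
  label : (x : List Bool) → x ∈ supp → A

/-- The pattern `p` occurs in the tree `t` rooted at the node `x`. -/
def TreePattern.occursAt {A : Type*} (p : TreePattern A) (t : InfTree A) (x : List Bool) : Prop :=
  ∀ y (hy : y ∈ p.supp), p.label y hy = t (x ++ y)

/-- The tree-shift `X_F` defined by a set `F` of forbidden patterns. -/
def treeShiftOf {A : Type*} (F : Set (TreePattern A)) : Set (InfTree A) :=
  { t | ∀ p ∈ F, ∀ x : List Bool, ¬ p.occursAt t x }

/-- A subset of trees is a tree-shift if it is `X_F` for some forbidden set `F`. -/
def IsTreeShift {A : Type*} (X : Set (InfTree A)) : Prop :=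
  ∃ F : Set (TreePattern A), X = treeShiftOf F

/-- A tree-shift of finite type: `X_F` for some finite forbidden set `F`. -/
def IsTSFT {A : Type*} (X : Set (InfTree A)) : Prop :=
  ∃ F : Set (TreePattern A), F.Finite ∧ X = treeShiftOf F

/-- A Markov tree-shift: `X_F` for a finite forbidden set `F` consisting of 2-blocks,
i.e. patterns with support `Σ_1 = {ε, 0, 1}`. -/
def IsMarkovTS {A : Type*} (X : Set (InfTree A)) : Prop :=
  ∃ F : Set (TreePattern A), F.Finite ∧
    (∀ p ∈ F, p.supp = ({[], [false], [true]} : Finset (List Bool))) ∧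
    X = treeShiftOf F

/-- The `n`-block of `t` rooted at `x` equals `u`; an `n`-block is recorded as a function
on all words, only its values on words of length `< n` (i.e. on `Σ_{n-1}`) are relevant. -/
def blockEqAt {A : Type*} (t : InfTree A) (x : List Bool) (n : ℕ) (u : List Bool → A) : Prop :=
  ∀ y : List Bool, y.length < n → t (x ++ y) = u y

/-- `u ∈ B_n(X)` : the `n`-block `u` appears in some tree of `X`. -/
def memBlocks {A : Type*} (X : Set (InfTree A)) (n : ℕ) (u : List Bool → A) : Prop :=
  ∃ t ∈ X, ∃ x : List Bool, blockEqAt t x n u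

/-- The maximal length `|P|` of a word in a finite set of words `P`. -/
def maxLen (P : Finset (List Bool)) : ℕ := P.sup List.length

/-- `P` is a complete prefix set (CPS): it is a prefix set (no word of `P` is a prefix of
another word of `P`) and every word of length at least `|P|` has a prefix in `P`. -/
def IsCPS (P : Finset (List Bool)) : Prop :=
  (∀ p ∈ P, ∀ q ∈ P, p <+: q → p = q) ∧
  (∀ x : List Bool, maxLen P ≤ x.length → ∃ p ∈ P, p <+: x)

/-- Irreducibility of a tree-shift: any two `n`-blocks `u, v` of `X` can be realized in a
single tree of `X`, with `u` rooted at `ε` and `v` rooted at every word of a CPS whose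
words have length at least `n`. -/
def IrreducibleTS {A : Type*} (X : Set (InfTree A)) : Prop :=
  ∀ n : ℕ, 0 < n → ∀ u v : List Bool → A, memBlocks X n u → memBlocks X n v →
    ∃ t ∈ X, ∃ P : Finset (List Bool), IsCPS P ∧ (∀ x ∈ P, n ≤ x.length) ∧
      blockEqAt t [] n u ∧ ∀ x ∈ P, blockEqAt t x n v

/-- Mixing for tree-shifts: there are two CPS `P_0, P_1` connecting any two blocks, the
choice of the CPS being governed by the last letter `w_{n-1}` of `w ∈ Σ^{n-1}`. -/
def MixingTS {A : Type*} (X : Set (InfTree A)) : Prop :=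
  ∃ P0 P1 : Finset (List Bool), IsCPS P0 ∧ IsCPS P1 ∧
    ∀ n m : ℕ, 0 < n → 0 < m → ∀ u v : List Bool → A,
      memBlocks X n u → memBlocks X m v →
      ∃ t ∈ X, blockEqAt t [] n u ∧
        ∀ w : List Bool, w.length = n - 1 → ∀ b : Bool, w.getLast? = some b →
          ∀ x ∈ (if b then P1 else P0), blockEqAt t (w ++ x) m v

/-- A periodic tree: `σ_x t = t` for all `x` in some complete prefix set. -/
def IsPeriodicTree {A : Type*} (t : InfTree A) : Prop :=
  ∃ P : Finset (List Bool), IsCPS P ∧ ∀ x ∈ P, treeShift x t = t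

/-- The metric on trees: `d(t,t') = 2^{-n}` where `n` is the least length of a
disagreement, and `d(t,t') = 0` if `t = t'`. -/
noncomputable def treeDist {A : Type*} (t t' : InfTree A) : ℝ :=
  haveI := Classical.propDecidable (t = t')
  if t = t' then 0
  else (2⁻¹ : ℝ) ^ sInf { n : ℕ | ∃ x : List Bool, x.length = n ∧ t x ≠ t' x }

/-- `U` is an open subset of `X` in the topology induced by the metric `treeDist`. -/
def IsOpenIn {A : Type*} (X U : Set (InfTree A)) : Prop :=
  U ⊆ X ∧ ∀ t ∈ U, ∃ ε : ℝ, 0 < ε ∧ ∀ t' ∈ X, treeDist t t' < ε → t' ∈ U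

/-- The `m`-block of `t` rooted at `x`, as a function on `Σ_{m-1}`. -/
def blockFun {A : Type*} (m : ℕ) (t : InfTree A) (x : List Bool) :
    { y : List Bool // y.length < m } → A :=
  fun y => t (x ++ y.1)

/-- `φ` is a sliding block code on `X`: it is induced by a local `m`-block map `Φ`. -/
def IsSlidingBlockCode {A B : Type*} (X : Set (InfTree A)) (φ : InfTree A → InfTree B) : Prop :=
  ∃ m : ℕ, 0 < m ∧ ∃ Φ : ({ y : List Bool // y.length < m } → A) → B,
    ∀ t ∈ X, ∀ x : List Bool, φ t x = Φ (blockFun m t x)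

/-- `φ` is a conjugacy from `X` onto `Y`: an invertible sliding block code whose inverse
is also a sliding block code. -/
def IsConjugacy {A B : Type*} (X : Set (InfTree A)) (Y : Set (InfTree B))
    (φ : InfTree A → InfTree B) : Prop :=
  IsSlidingBlockCode X φ ∧ Set.MapsTo φ X Y ∧
    ∃ ψ : InfTree B → InfTree A, IsSlidingBlockCode Y ψ ∧ Set.MapsTo ψ Y X ∧
      (∀ t ∈ X, ψ (φ t) = t) ∧ (∀ s ∈ Y, φ (ψ s) = s)

/-- The `m`-th higher block code `φ_m`, sending `t` to the tree of `m`-blocks of `t`. -/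
def higherBlockMap {A : Type*} (m : ℕ) (t : InfTree A) :
    InfTree ({ y : List Bool // y.length < m } → A) :=
  fun x => blockFun m t x

/-- The vertex tree-shift determined by two transition matrices `A_0, A_1`. -/
def vertexTreeShift {n : ℕ} (A0 A1 : Matrix (Fin n) (Fin n) ℕ) : Set (InfTree (Fin n)) :=
  { t | ∀ x : List Bool,
      A0 (t x) (t (x ++ [false])) = 1 ∧ A1 (t x) (t (x ++ [true])) = 1 }

/-- `A_x = A_{x_l} A_{x_{l-1}} ⋯ A_{x_1}` for a word `x = x_1 … x_l`. -/
def matWord {n : ℕ} (A0 A1 : Matrix (Fin n) (Fin n) ℕ) :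
    List Bool → Matrix (Fin n) (Fin n) ℕ
  | [] => 1
  | b :: rest => matWord A0 A1 rest * (if b then A1 else A0)

/-- A 0-1 matrix. -/
def ZeroOne {n : ℕ} (M : Matrix (Fin n) (Fin n) ℕ) : Prop := ∀ i j, M i j ≤ 1

/-- The graph representation of the pair `(A_0, A_1)` is essential: every row and every
column of each matrix contains a nonzero entry. -/
def EssentialPair {n : ℕ} (A0 A1 : Matrix (Fin n) (Fin n) ℕ) : Prop :=
  (∀ i, ∃ j, 0 < A0 i j) ∧ (∀ j, ∃ i, 0 < A0 i j) ∧
  (∀ i, ∃ j, 0 < A1 i j) ∧ (∀ j, ∃ i, 0 < A1 i j)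

/-- An irreducible nonnegative matrix. -/
def MatIrreducible {n : ℕ} (A : Matrix (Fin n) (Fin n) ℕ) : Prop :=
  ∀ i j, ∃ k : ℕ, 1 ≤ k ∧ 0 < (A ^ k) i j

/-- A primitive nonnegative matrix. -/
def MatPrimitive {n : ℕ} (A : Matrix (Fin n) (Fin n) ℕ) : Prop :=
  ∃ k : ℕ, 1 ≤ k ∧ ∀ i j, 0 < (A ^ k) i j

/-- `V_w`: the set of possible terminal states of the labeled path `w`. -/
def Vset {n : ℕ} (M : Matrix (Fin n) (Fin n) ℕ) : Set (Fin n) := { j | ∃ i, 0 < M i j }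

/-- A cycle: a word `w = w_1 … w_k` with `k ≥ 2`, `w_k = w_1` and `V_w = V_{w_1}`. -/
def IsCycle {n : ℕ} (A0 A1 : Matrix (Fin n) (Fin n) ℕ) (w : List Bool) : Prop :=
  2 ≤ w.length ∧ w.getLast? = w.head? ∧
    Vset (matWord A0 A1 w) = Vset (matWord A0 A1 (w.take 1))

section Aux

lemma cps_nonempty {P : Finset (List Bool)} (h : IsCPS P) : P.Nonempty := by
  obtain ⟨p, hp, -⟩ := h.2 (List.replicate (maxLen P) false) (by simp)
  exact ⟨p, hp⟩

/-- All words of a given length. -/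
def wordsOfLen : ℕ → Finset (List Bool)
  | 0 => {[]}
  | n+1 => (wordsOfLen n).biUnion (fun w => {false :: w, true :: w})

lemma mem_wordsOfLen {n : ℕ} {x : List Bool} : x ∈ wordsOfLen n ↔ x.length = n := by
  induction n generalizing x with
  | zero => simp [wordsOfLen, List.length_eq_zero_iff]
  | succ n ih =>
    simp only [wordsOfLen, Finset.mem_biUnion, Finset.mem_insert, Finset.mem_singleton]
    constructor
    · rintro ⟨w, hw, rfl | rfl⟩ <;> simp [ih.mp hw]
    · intro hx
      match x with
      | b :: rest =>
        refine ⟨rest, ih.mpr (by simpa using hx), ?_⟩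
        cases b
        · exact Or.inl rfl
        · exact Or.inr rfl

lemma memBlocks_extend {A : Type} {X : Set (InfTree A)} {n N : ℕ} {u : List Bool → A}
    (h : memBlocks X n u) (hnN : n ≤ N) :
    ∃ U, memBlocks X N U ∧ ∀ y : List Bool, y.length < n → U y = u y := by
  obtain ⟨t, ht, x, hx⟩ := h
  exact ⟨fun y => t (x ++ y), ⟨t, ht, x, fun y _ => rfl⟩, fun y hy => hx y hy⟩

lemma derived_cps {P : Finset (List Bool)} (hP : IsCPS P) {L : ℕ}
    (hlen : ∀ p ∈ P, L ≤ p.length) {w : List Bool} (hw : w.length < L) :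
    IsCPS ((P.filter (w <+: ·)).image (List.drop w.length)) ∧
    ∀ x ∈ (P.filter (w <+: ·)).image (List.drop w.length), w ++ x ∈ P := by
  classical
  set Pw := (P.filter (w <+: ·)).image (List.drop w.length) with hPw
  have hmem : ∀ x ∈ Pw, w ++ x ∈ P := by
    intro x hx
    obtain ⟨p, hp, rfl⟩ := Finset.mem_image.mp hx
    obtain ⟨hpP, hwp⟩ := Finset.mem_filter.mp hp
    obtain ⟨s, rfl⟩ := hwp
    simpa [List.drop_left] using hpP
  refine ⟨⟨?_, ?_⟩, hmem⟩
  · intro x hx x' hx' hxx'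
    have h1 := hmem x hx
    have h2 := hmem x' hx'
    have : w ++ x = w ++ x' := hP.1 _ h1 _ h2 (by
      obtain ⟨s, rfl⟩ := hxx'
      exact ⟨s, by simp [List.append_assoc]⟩)
    exact List.append_cancel_left this
  · intro z hz
    set z' := z ++ List.replicate (maxLen P) false with hz'
    have hlenz' : maxLen P ≤ (w ++ z').length := by simp [hz']; omega
    obtain ⟨p, hpP, hpz⟩ := hP.2 (w ++ z') hlenz'
    have hwp : w <+: p := by
      refine List.prefix_of_prefix_length_le (List.prefix_append w z') hpz ?_
      have := hlen p hpP; omega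
    obtain ⟨x, rfl⟩ := hwp
    have hxPw : x ∈ Pw := by
      rw [hPw]
      refine Finset.mem_image.mpr ⟨w ++ x, Finset.mem_filter.mpr ⟨hpP, ⟨x, rfl⟩⟩, ?_⟩
      simp [List.drop_left]
    refine ⟨x, hxPw, ?_⟩
    have hxz' : x <+: z' := by
      obtain ⟨s, hs⟩ := hpz
      exact ⟨s, List.append_cancel_left (by rw [← List.append_assoc, hs])⟩
    have hxlen : x.length ≤ z.length := le_trans (Finset.le_sup hxPw) hz
    exact List.prefix_of_prefix_length_le hxz' (List.prefix_append z _) hxlen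

lemma union_spec {n : ℕ} {Q : List Bool → Finset (List Bool)}
    (hQ : ∀ w : List Bool, w.length = n → IsCPS (Q w)) :
    IsCPS ((wordsOfLen n).biUnion (fun w => (Q w).image (w ++ ·))) ∧
    (∀ p ∈ (wordsOfLen n).biUnion (fun w => (Q w).image (w ++ ·)), n ≤ p.length) ∧
    (∀ p ∈ (wordsOfLen n).biUnion (fun w => (Q w).image (w ++ ·)),
      ∃ w x, w.length = n ∧ x ∈ Q w ∧ p = w ++ x) := by
  classical
  set P := (wordsOfLen n).biUnion (fun w => (Q w).image (w ++ ·)) with hPdef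
  have hmem : ∀ p ∈ P, ∃ w x, w.length = n ∧ x ∈ Q w ∧ p = w ++ x := by
    intro p hp
    obtain ⟨w, hw, hp2⟩ := Finset.mem_biUnion.mp hp
    obtain ⟨x, hx, rfl⟩ := Finset.mem_image.mp hp2
    exact ⟨w, x, mem_wordsOfLen.mp hw, hx, rfl⟩
  have hlenP : ∀ p ∈ P, n ≤ p.length := by
    intro p hp
    obtain ⟨w, x, hw, hx, rfl⟩ := hmem p hp
    simp [hw]
  refine ⟨⟨?_, ?_⟩, hlenP, hmem⟩
  · intro p hp q hq hpq
    obtain ⟨w, x, hw, hx, rfl⟩ := hmem p hp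
    obtain ⟨w', x', hw', hx', rfl⟩ := hmem q hq
    obtain ⟨s, hs⟩ := hpq
    have e1 : ((w ++ x) ++ s).take n = w := by
      rw [List.append_assoc, ← hw, List.take_left]
    have e2 : (w' ++ x').take n = w' := by rw [← hw', List.take_left]
    have hww' : w = w' := by rw [← e1, hs, e2]
    subst hww'
    have hxx' : x ++ s = x' := List.append_cancel_left (by rw [← List.append_assoc, hs])
    have : x = x' := (hQ w hw).1 x hx x' hx' ⟨s, hxx'⟩
    rw [this]
  · intro y hy
    have hw0 : List.replicate n false ∈ wordsOfLen n := mem_wordsOfLen.mpr (by simp)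
    obtain ⟨x0, hx0⟩ := cps_nonempty (hQ (List.replicate n false) (by simp))
    have hp0 : List.replicate n false ++ x0 ∈ P :=
      Finset.mem_biUnion.mpr ⟨_, hw0, Finset.mem_image_of_mem _ hx0⟩
    have hnP : n ≤ maxLen P := le_trans (by simp) (Finset.le_sup hp0)
    have hny : n ≤ y.length := le_trans hnP hy
    set w := y.take n with hwdef
    set z := y.drop n with hzdef
    have hwlen : w.length = n := by simp [hwdef]; omega
    have hwW : w ∈ wordsOfLen n := mem_wordsOfLen.mpr hwlen
    have hzlen : maxLen (Q w) ≤ z.length := by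
      apply Finset.sup_le
      intro x hx
      have hmemP : w ++ x ∈ P :=
        Finset.mem_biUnion.mpr ⟨w, hwW, Finset.mem_image_of_mem _ hx⟩
      have h1 : (w ++ x).length ≤ maxLen P := Finset.le_sup hmemP
      simp only [List.length_append, hwlen] at h1
      simp only [hzdef, List.length_drop]
      omega
    obtain ⟨x, hxQ, hxz⟩ := (hQ w hwlen).2 z hzlen
    refine ⟨w ++ x, Finset.mem_biUnion.mpr ⟨w, hwW, Finset.mem_image_of_mem _ hxQ⟩, ?_⟩
    obtain ⟨s, hs⟩ := hxz
    refine ⟨s, ?_⟩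
    rw [List.append_assoc, hs, hwdef, hzdef]
    exact List.take_append_drop n y

lemma to_irreducible {A : Type} {X : Set (InfTree A)}
    (H : ∀ n m : ℕ, 0 < n → 0 < m → ∀ u v : List Bool → A,
      memBlocks X n u → memBlocks X m v →
      ∃ Q : List Bool → Finset (List Bool),
        (∀ w : List Bool, w.length = n - 1 → IsCPS (Q w)) ∧
        ∃ t ∈ X, blockEqAt t [] n u ∧
          ∀ w : List Bool, w.length = n - 1 → ∀ x ∈ Q w, blockEqAt t (w ++ x) m v) :
    IrreducibleTS X := by
  intro n hn u v hu hv
  obtain ⟨U, hU, hUu⟩ := memBlocks_extend hu (Nat.le_succ n)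
  obtain ⟨Q, hQcps, t, htX, htU, htv⟩ := H (n+1) n (Nat.succ_pos n) hn U v hU hv
  simp only [Nat.add_sub_cancel] at hQcps htv
  obtain ⟨hcps, hlen, hmem⟩ := union_spec hQcps
  refine ⟨t, htX, _, hcps, hlen, ?_, ?_⟩
  · intro y hy
    rw [htU y (lt_trans hy (Nat.lt_succ_self n))]
    exact hUu y hy
  · intro p hp y hy
    obtain ⟨w, x, hwn, hxQ, rfl⟩ := hmem p hp
    exact htv w hwn x hxQ y hy

end Aux

/-- equivalent formulations of irreducibility of a tree-shift. -/
theorem irreducible_iff_equiv_defs {A : Type} [Fintype A] (X : Set (InfTree A))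
    (hX : IsTreeShift X) :
    (IrreducibleTS X ↔
      (∀ n m : ℕ, 0 < n → 0 < m → ∀ u v : List Bool → A,
        memBlocks X n u → memBlocks X m v →
        ∃ Pf : List Bool → Finset (List Bool),
          (∀ w : List Bool, w.length = n - 1 → IsCPS (Pf w)) ∧
          ∃ t ∈ X, blockEqAt t [] n u ∧
            ∀ w : List Bool, w.length = n - 1 → ∀ x ∈ Pf w,
              blockEqAt t (w ++ x) m v)) ∧
    (IrreducibleTS X ↔
      (∀ n m : ℕ, 0 < n → 0 < m → ∀ u v : List Bool → A,
        memBlocks X n u → memBlocks X m v →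
        ∃ (l : ℕ) (Ps : Fin l → Finset (List Bool)),
          (∀ k : Fin l, IsCPS (Ps k)) ∧
          ∃ t ∈ X, blockEqAt t [] n u ∧
            ∀ w : List Bool, w.length = n - 1 →
              ∃ k : Fin l, ∀ x ∈ Ps k, blockEqAt t (w ++ x) m v)) := by
  have irr_to_ii : IrreducibleTS X →
      (∀ n m : ℕ, 0 < n → 0 < m → ∀ u v : List Bool → A,
        memBlocks X n u → memBlocks X m v →
        ∃ Pf : List Bool → Finset (List Bool),
          (∀ w : List Bool, w.length = n - 1 → IsCPS (Pf w)) ∧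
          ∃ t ∈ X, blockEqAt t [] n u ∧
            ∀ w : List Bool, w.length = n - 1 → ∀ x ∈ Pf w,
              blockEqAt t (w ++ x) m v) := by
    intro hIrr n m hn hm u v hu hv
    classical
    obtain ⟨U, hU, hUu⟩ := memBlocks_extend hu (le_max_left n m)
    obtain ⟨V, hV, hVv⟩ := memBlocks_extend hv (le_max_right n m)
    obtain ⟨t, htX, P, hcps, hlenP, htU, htV⟩ :=
      hIrr (max n m) (lt_of_lt_of_le hn (le_max_left n m)) U V hU hV
    have hw' : ∀ w : List Bool, w.length = n - 1 → w.length < max n m := by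
      intro w hw; have := le_max_left n m; omega
    refine ⟨fun w => (P.filter (w <+: ·)).image (List.drop w.length), ?_, t, htX, ?_, ?_⟩
    · intro w hw
      exact (derived_cps hcps hlenP (hw' w hw)).1
    · intro y hy
      rw [htU y (lt_of_lt_of_le hy (le_max_left n m))]
      exact hUu y hy
    · intro w hw x hx y hy
      have hmem := (derived_cps hcps hlenP (hw' w hw)).2 x hx
      rw [htV _ hmem y (lt_of_lt_of_le hy (le_max_right n m))]
      exact hVv y hy
  have ii_to_iii :
      (∀ n m : ℕ, 0 < n → 0 < m → ∀ u v : List Bool → A,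
        memBlocks X n u → memBlocks X m v →
        ∃ Pf : List Bool → Finset (List Bool),
          (∀ w : List Bool, w.length = n - 1 → IsCPS (Pf w)) ∧
          ∃ t ∈ X, blockEqAt t [] n u ∧
            ∀ w : List Bool, w.length = n - 1 → ∀ x ∈ Pf w,
              blockEqAt t (w ++ x) m v) →
      (∀ n m : ℕ, 0 < n → 0 < m → ∀ u v : List Bool → A,
        memBlocks X n u → memBlocks X m v →
        ∃ (l : ℕ) (Ps : Fin l → Finset (List Bool)),
          (∀ k : Fin l, IsCPS (Ps k)) ∧
          ∃ t ∈ X, blockEqAt t [] n u ∧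
            ∀ w : List Bool, w.length = n - 1 →
              ∃ k : Fin l, ∀ x ∈ Ps k, blockEqAt t (w ++ x) m v) := by
    intro hii n m hn hm u v hu hv
    obtain ⟨Pf, hPf, t, htX, htu, htv⟩ := hii n m hn hm u v hu hv
    classical
    set S := (wordsOfLen (n-1)).image Pf with hS
    refine ⟨S.card, fun k => (S.equivFin.symm k).1, ?_, t, htX, htu, ?_⟩
    · intro k
      obtain ⟨w, hw, hwe⟩ := Finset.mem_image.mp (S.equivFin.symm k).2
      show IsCPS (S.equivFin.symm k).1
      rw [← hwe]
      exact hPf w (mem_wordsOfLen.mp hw)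
    · intro w hw
      have hmemS : Pf w ∈ S := Finset.mem_image_of_mem Pf (mem_wordsOfLen.mpr hw)
      refine ⟨S.equivFin ⟨Pf w, hmemS⟩, ?_⟩
      intro x hx
      simp only [Equiv.symm_apply_apply] at hx
      exact htv w hw x hx
  have iii_to_i :
      (∀ n m : ℕ, 0 < n → 0 < m → ∀ u v : List Bool → A,
        memBlocks X n u → memBlocks X m v →
        ∃ (l : ℕ) (Ps : Fin l → Finset (List Bool)),
          (∀ k : Fin l, IsCPS (Ps k)) ∧
          ∃ t ∈ X, blockEqAt t [] n u ∧
            ∀ w : List Bool, w.length = n - 1 →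
              ∃ k : Fin l, ∀ x ∈ Ps k, blockEqAt t (w ++ x) m v) →
      IrreducibleTS X := by
    intro hiii
    apply to_irreducible
    intro n m hn hm u v hu hv
    obtain ⟨l, Ps, hPs, t, htX, htu, htv⟩ := hiii n m hn hm u v hu hv
    classical
    choose g hg using htv
    refine ⟨fun w => if h : w.length = n - 1 then Ps (g w h) else {[]}, ?_, t, htX, htu, ?_⟩
    · intro w hw; simp only [dif_pos hw]; exact hPs _
    · intro w hw x hx y hy
      simp only [dif_pos hw] at hx
      exact hg w hw x hx y hy
  exact ⟨⟨irr_to_ii, fun h => to_irreducible h⟩,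
    ⟨fun h => ii_to_iii (irr_to_ii h), iii_to_i⟩⟩
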